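/- Let M be a model category whose underlying category is abelian and all of whose objects are cofibrant. Then every simplicial object in M is Reedy cofibrant with respect to the Reedy model structure on Func(Δ^op, M). -/

import Mathlib

open CategoryTheory Limits Opposite Simplicial

universe w v u v₁ u₁ v₂ u₂ v₃ u₃

namespace Paper
/-! ## Model category basics -/

section ModelBasics

variable {C : Type u} [Category.{v} C]

/-- `f` is a retract of `g` in the arrow category. -/
def IsRetractOf {X Y X' Y' : C} (f : X ⟶ Y) (g : X' ⟶ Y') : Prop :=
  ∃ (iX : X ⟶ X') (rX : X' ⟶ X) (iY : Y ⟶ Y') (rY : Y' ⟶ Y),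
    iX ≫ rX = 𝟙 X ∧ iY ≫ rY = 𝟙 Y ∧ iX ≫ g = f ≫ iY ∧ g ≫ rY = rX ≫ f

/-- A (closed, Quillen) model structure on a category: three classes of morphisms
satisfying two-out-of-three, retract closure, lifting and factorization axioms. -/
structure ModelStructure (C : Type u) [Category.{v} C] : Type (max u v) where
  weq : MorphismProperty C
  fib : MorphismProperty C
  cof : MorphismProperty C
  weq_id : ∀ X : C, weq (𝟙 X)
  weq_comp : ∀ {X Y Z : C} (f : X ⟶ Y) (g : Y ⟶ Z), weq f → weq g → weq (f ≫ g)
  weq_cancel_left : ∀ {X Y Z : C} (f : X ⟶ Y) (g : Y ⟶ Z), weq f → weq (f ≫ g) → weq g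
  weq_cancel_right : ∀ {X Y Z : C} (f : X ⟶ Y) (g : Y ⟶ Z), weq g → weq (f ≫ g) → weq f
  weq_retract : ∀ {X Y X' Y' : C} {f : X ⟶ Y} {g : X' ⟶ Y'}, IsRetractOf f g → weq g → weq f
  fib_retract : ∀ {X Y X' Y' : C} {f : X ⟶ Y} {g : X' ⟶ Y'}, IsRetractOf f g → fib g → fib f
  cof_retract : ∀ {X Y X' Y' : C} {f : X ⟶ Y} {g : X' ⟶ Y'}, IsRetractOf f g → cof g → cof f
  lift_cof_trivFib : ∀ {A B X Y : C} (i : A ⟶ B) (p : X ⟶ Y),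
    cof i → fib p → weq p → HasLiftingProperty i p
  lift_trivCof_fib : ∀ {A B X Y : C} (i : A ⟶ B) (p : X ⟶ Y),
    cof i → weq i → fib p → HasLiftingProperty i p
  factor_cof_trivFib : ∀ {X Y : C} (f : X ⟶ Y),
    ∃ (Z : C) (i : X ⟶ Z) (p : Z ⟶ Y), cof i ∧ fib p ∧ weq p ∧ i ≫ p = f
  factor_trivCof_fib : ∀ {X Y : C} (f : X ⟶ Y),
    ∃ (Z : C) (i : X ⟶ Z) (p : Z ⟶ Y), cof i ∧ weq i ∧ fib p ∧ i ≫ p = f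

variable (M : ModelStructure C)

/-- An object is cofibrant if any morphism from an initial object to it is a cofibration. -/
def ModelStructure.CofibrantObj (X : C) : Prop :=
  ∀ (I : C) (_ : IsInitial I) (f : I ⟶ X), M.cof f

/-- An object is fibrant if any morphism from it to a terminal object is a fibration. -/
def ModelStructure.FibrantObj (X : C) : Prop :=
  ∀ (T : C) (_ : IsTerminal T) (f : X ⟶ T), M.fib f

/-- Left properness: weak equivalences are stable under pushout along cofibrations. -/
def ModelStructure.LeftProper : Prop :=
  ∀ ⦃A B A' P : C⦄ (w : A ⟶ B) (c : A ⟶ A') (inl : B ⟶ P) (inr : A' ⟶ P),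
    IsPushout w c inl inr → M.weq w → M.cof c → M.weq inr

/-- Right properness: weak equivalences are stable under pullback along fibrations. -/
def ModelStructure.RightProper : Prop :=
  ∀ ⦃P A B A' : C⦄ (fst : P ⟶ A) (snd : P ⟶ A') (w : A ⟶ B) (p : A' ⟶ B),
    IsPullback fst snd w p → M.weq w → M.fib p → M.weq snd

/-- The right lifting property against a set of arrows. -/
def rlpOn (S : Set (Arrow C)) : MorphismProperty C :=
  fun _ _ g => ∀ a ∈ S, HasLiftingProperty a.hom g

/-- `M` is cofibrantly generated by the set `I` of generating cofibrations and the
set `J` of generating acyclic cofibrations. -/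
structure CofibrantlyGeneratedBy (M : ModelStructure C) (I J : Set (Arrow C)) : Prop where
  fib_iff : ∀ {X Y : C} (f : X ⟶ Y), M.fib f ↔ rlpOn J f
  trivFib_iff : ∀ {X Y : C} (f : X ⟶ Y), (M.fib f ∧ M.weq f) ↔ rlpOn I f
  I_cof : ∀ a ∈ I, M.cof a.hom
  J_trivCof : ∀ a ∈ J, M.cof a.hom ∧ M.weq a.hom

end ModelBasics
/-! ## Latching objects and Reedy cofibrations -/

section Latching

variable {M : Type u} [Category.{v} M]

/-- The latching category at `n`: surjections `n ↠ m` in the simplex category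
onto objects of strictly smaller dimension. -/
def LatchIx (n : SimplexCategory) : Type :=
  ObjectProperty.FullSubcategory (fun g : Under n =>
    Function.Surjective g.hom.toOrderHom ∧ g.right.len < n.len)

instance (n : SimplexCategory) : Category (LatchIx n) := ObjectProperty.FullSubcategory.category _

/-- The latching diagram of a simplicial object. -/
def latchDiagram (X : SimplicialObject M) (n : SimplexCategory) : (LatchIx n)ᵒᵖ ⥤ M :=
  (ObjectProperty.ι _ ⋙ Under.forget n).op ⋙ X

/-- The canonical cocone legs from the latching diagram into `X_n`. -/
def latchLeg (X : SimplicialObject M) (n : SimplexCategory) (j : (LatchIx n)ᵒᵖ) :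
    (latchDiagram X n).obj j ⟶ X.obj (op n) :=
  X.map (j.unop.obj.hom.op)

/-- `X` has cofibrant latching maps with respect to the class `P`: for every
colimit realization of the latching object, the induced latching map lies in `P`. -/
def LatchMapIn (P : MorphismProperty M) (X : SimplicialObject M) : Prop :=
  ∀ (n : SimplexCategory) (c : Cocone (latchDiagram X n)) (_ : IsColimit c)
    (ℓ : c.pt ⟶ X.obj (op n)),
    (∀ j, c.ι.app j ≫ ℓ = latchLeg X n j) → P ℓ

/-- `φ` is a Reedy cofibration with respect to the class `P` of cofibrations:
every realization of the relative latching map lies in `P`. -/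
def ReedyCofWrt (P : MorphismProperty M) {V W : SimplicialObject M} (φ : V ⟶ W) : Prop :=
  ∀ (n : SimplexCategory)
    (cV : Cocone (latchDiagram V n)) (_ : IsColimit cV)
    (cW : Cocone (latchDiagram W n)) (_ : IsColimit cW)
    (ℓV : cV.pt ⟶ V.obj (op n)) (_ : ∀ j, cV.ι.app j ≫ ℓV = latchLeg V n j)
    (ℓW : cW.pt ⟶ W.obj (op n)) (_ : ∀ j, cW.ι.app j ≫ ℓW = latchLeg W n j)
    (Lφ : cV.pt ⟶ cW.pt)
    (_ : ∀ j, cV.ι.app j ≫ Lφ = φ.app (op j.unop.obj.right) ≫ cW.ι.app j)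
    {Q : M} (inl : V.obj (op n) ⟶ Q) (inr : cW.pt ⟶ Q)
    (_ : IsPushout ℓV Lφ inl inr)
    (r : Q ⟶ W.obj (op n)),
    inl ≫ r = φ.app (op n) → inr ≫ r = ℓW → P r

end Latching

/-! ## Auxiliary lemmas -/

section Aux

open SimplicialObject

variable {C : Type u} [Category.{v} C]

/-- Every simplicial object in an abelian category admits a splitting, via Dold-Kan. -/
noncomputable def splittingOfAbelian [Abelian C] (X : SimplicialObject C) :
    SimplicialObject.Splitting X :=
  (AlgebraicTopology.DoldKan.Γ₀.splitting
      (CategoryTheory.Abelian.DoldKan.equivalence.functor.obj X)).ofIso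
    ((CategoryTheory.Abelian.DoldKan.equivalence.unitIso.app X).symm)

/-- The latching index attached to a non-identity element of `Splitting.IndexSet (op n)`. -/
def latchIxOf {n : SimplexCategory} (A : SimplicialObject.Splitting.IndexSet (op n))
    (h : ¬ A.EqId) : LatchIx n :=
  ⟨Under.mk A.e,
    SimplexCategory.epi_iff_surjective.mp A.2.2,
    lt_of_not_ge (fun hle => h (A.eqId_iff_len_le.mpr hle))⟩

/-- A split monomorphism is a cofibration whenever all objects are cofibrant. -/
theorem cof_of_splitMono [Abelian C] (ms : ModelStructure C)
    (hcof : ∀ X : C, ms.CofibrantObj X)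
    {P Xn : C} (ℓ : P ⟶ Xn) (ρ : Xn ⟶ P) (hρ : ℓ ≫ ρ = 𝟙 P) : ms.cof ℓ := by
  have hlift : ∀ {A B : C} (p : A ⟶ B), ms.fib p → ms.weq p → HasLiftingProperty ℓ p := by
    intro A B p hp hwp
    constructor
    intro f g sq
    haveI := ms.lift_cof_trivFib (initial.to Xn) p
      (hcof Xn _ initialIsInitial _) hp hwp
    have sq0 : CommSq (initial.to A) (initial.to Xn) p g := ⟨by apply Limits.initial.hom_ext⟩
    have e1 : ℓ ≫ (𝟙 Xn - ρ ≫ ℓ) = 0 := by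
      rw [Preadditive.comp_sub, Category.comp_id, ← Category.assoc, hρ,
        Category.id_comp, sub_self]
    refine ⟨⟨⟨ρ ≫ f + (𝟙 Xn - ρ ≫ ℓ) ≫ sq0.lift, ?_, ?_⟩⟩⟩
    · rw [Preadditive.comp_add, ← Category.assoc, ← Category.assoc, hρ, e1,
        Category.id_comp, Limits.zero_comp, add_zero]
    · rw [Preadditive.add_comp, Category.assoc, Category.assoc, sq0.fac_right, sq.w,
        Preadditive.sub_comp, Category.id_comp, Category.assoc]
      abel
  obtain ⟨Z, i, q, hi, hq, hwq, hfac⟩ := ms.factor_cof_trivFib ℓ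
  haveI := hlift q hq hwq
  have sq : CommSq i ℓ q (𝟙 Xn) := ⟨by rw [Category.comp_id, hfac]⟩
  exact ms.cof_retract
    ⟨𝟙 P, 𝟙 P, sq.lift, q, by simp, sq.fac_right,
      by rw [Category.id_comp, sq.fac_left], by rw [hfac, Category.id_comp]⟩ hi

/-- The latching map of a simplicial object in an abelian category is a split mono. -/
theorem exists_latch_retraction [Abelian C] (X : SimplicialObject C) (n : SimplexCategory)
    (c : Cocone (latchDiagram X n)) (hc : IsColimit c)
    (ℓ : c.pt ⟶ X.obj (op n)) (hℓ : ∀ j, c.ι.app j ≫ ℓ = latchLeg X n j) :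
    ∃ ρ : X.obj (op n) ⟶ c.pt, ℓ ≫ ρ = 𝟙 c.pt := by
  classical
  let s := splittingOfAbelian X
  refine ⟨s.desc (op n) (fun A => if h : A.EqId then 0 else
    (s.cofan A.1).inj (Splitting.IndexSet.id A.1) ≫ c.ι.app (op (latchIxOf A h))), ?_⟩
  apply hc.hom_ext
  intro j
  simp only [Category.comp_id]
  rw [← Category.assoc, hℓ j]
  haveI : Epi j.unop.obj.hom := SimplexCategory.epi_iff_surjective.mpr j.unop.property.1
  apply s.hom_ext'
  intro B
  dsimp only [latchLeg]
  haveI : Epi (j.unop.obj.hom.op).unop := this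
  erw [← Category.assoc, @Splitting.cofan_inj_epi_naturality _ _ _ s _ _ B (j.unop.obj.hom.op) this]
  erw [s.ι_desc]
  set A := @Splitting.IndexSet.epiComp _ _ B (j.unop.obj.hom.op) this with hAdef
  have hA : ¬ A.EqId := by
    rw [Splitting.IndexSet.eqId_iff_len_le]
    intro hle
    exact absurd (hle.trans (@SimplexCategory.len_le_of_epi _ _
      B.e B.2.2)) (not_le.mpr j.unop.property.2)
  rw [dif_neg hA]
  let u : j.unop ⟶ latchIxOf A hA := ObjectProperty.homMk (Under.homMk B.e rfl)
  have hnat := c.w u.op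
  rw [← hnat]
  have hmap : (latchDiagram X n).map u.op = X.map B.e.op := rfl
  erw [hmap, ← Category.assoc]
  haveI : Epi (B.e.op).unop := B.2.2
  erw [@Splitting.cofan_inj_epi_naturality _ _ _ s _ _ (Splitting.IndexSet.id A.1) B.e.op this]
  simp only [Splitting.cofan_inj_eq, Category.assoc, Category.comp_id]
  have he : (@Splitting.IndexSet.epiComp _ _ (Splitting.IndexSet.id A.1) B.e.op this).e = B.e := by
    simp [Splitting.IndexSet.epiComp, Splitting.IndexSet.e, Splitting.IndexSet.id]
    rfl
  rw [he]
  have hid : c.ι.app j ≫ 𝟙 c.pt = c.ι.app j := Category.comp_id _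
  rfl

end Aux

/-- **Statement 2.** If `M` is a model category whose underlying category is abelian
and all of whose objects are cofibrant, then every simplicial object in `M` is Reedy
cofibrant: all latching maps are cofibrations. -/
theorem reedy_cofibrant_of_abelian_of_all_cofibrant
    (M : Type u) [Category.{v} M] [Abelian M]
    (ms : ModelStructure M)
    (hcof : ∀ X : M, ms.CofibrantObj X) :
    ∀ X : SimplicialObject M, LatchMapIn ms.cof X := by
  intro X n c hc ℓ hℓ
  obtain ⟨ρ, hρ⟩ := exists_latch_retraction X n c hc ℓ hℓ
  exact cof_of_splitMono ms hcof ℓ ρ hρ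
end Paper
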